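/- arXiv:2308.11267 — 2 statements merged into one kernel-verified Lean document; each statement's English description precedes it below -/
import Mathlib

section
/- Lagrangian policy gradient theorem: for a finite MDP with combined reward 𝐫 = r − λc, a policy π_θ differentiable in θ, transition kernel P, and starting state s_0, the gradient of the combined value satisfies ∇_θ 𝐕_{π_θ}(s_0) = Σ_{s ∈ S} η(s) Σ_{a ∈ A} 𝐐_{π_θ}(s,a) ∇_θ π_θ(a|s), where η(s) = Σ_{k=0}^∞ γ^k ℙ(s_k = s | s_0, π_θ) is the discounted state-visitation measure. -/
private lemma pg_unroll_aux {S : Type} [Fintype S] [DecidableEq S]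
    {W : Type} [NormedAddCommGroup W] [NormedSpace ℝ W] [CompleteSpace W]
    (γ : ℝ) (hγ0 : 0 ≤ γ) (hγ1 : γ < 1)
    (M : S → S → ℝ) (F G : S → W)
    (hA : ∀ s, F s = G s + γ • ∑ s', M s s' • F s')
    (s0 : S) (d : ℕ → S → ℝ)
    (hd0 : ∀ s, d 0 s = if s = s0 then (1 : ℝ) else 0)
    (hdrec : ∀ k s', d (k + 1) s' = ∑ s, d k s * M s s')
    (hd_nonneg : ∀ k s, 0 ≤ d k s) (hd_le_one : ∀ k s, d k s ≤ 1)
    (η : S → ℝ) (hη : ∀ s, η s = ∑' k : ℕ, γ ^ k * d k s) :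
    F s0 = ∑ s, η s • G s := by
  classical
  have key : ∀ K : ℕ, F s0 = (∑ k ∈ Finset.range K, γ ^ k • (∑ s, d k s • G s))
      + γ ^ K • ∑ s, d K s • F s := by
    intro K
    induction K with
    | zero =>
      simp only [Finset.range_zero, Finset.sum_empty, zero_add, pow_zero, one_smul]
      have h0 : ∀ s : S, d 0 s • F s = (if s = s0 then F s else 0) := by
        intro s; rw [hd0]; split <;> simp
      rw [Finset.sum_congr rfl fun s _ => h0 s, Finset.sum_ite_eq' Finset.univ s0 F]
      simp
    | succ K ih =>
      have h4 : ∀ s : S, d K s • γ • ∑ s', M s s' • F s'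
          = γ • ∑ s', (d K s * M s s') • F s' := by
        intro s
        rw [smul_comm]
        congr 1
        rw [Finset.smul_sum]
        exact Finset.sum_congr rfl fun s' _ => smul_smul _ _ _
      have step : ∑ s, d K s • F s = (∑ s, d K s • G s)
          + γ • ∑ s', d (K+1) s' • F s' := by
        calc ∑ s, d K s • F s
            = ∑ s, (d K s • G s + d K s • γ • ∑ s', M s s' • F s') := by
              refine Finset.sum_congr rfl fun s _ => ?_
              rw [hA s, smul_add]
          _ = (∑ s, d K s • G s) + ∑ s, d K s • γ • ∑ s', M s s' • F s' :=
              Finset.sum_add_distrib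
          _ = (∑ s, d K s • G s) + ∑ s : S, γ • ∑ s', (d K s * M s s') • F s' := by
              rw [Finset.sum_congr rfl fun s _ => h4 s]
          _ = (∑ s, d K s • G s) + γ • ∑ s : S, ∑ s', (d K s * M s s') • F s' := by
              rw [Finset.smul_sum]
          _ = (∑ s, d K s • G s) + γ • ∑ s', ∑ s : S, (d K s * M s s') • F s' := by
              rw [Finset.sum_comm]
          _ = (∑ s, d K s • G s) + γ • ∑ s', d (K+1) s' • F s' := by
              congr 1
              congr 1
              refine Finset.sum_congr rfl fun s' _ => ?_
              rw [hdrec, Finset.sum_smul]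
      rw [Finset.sum_range_succ, ih, step, smul_add, smul_smul, add_assoc, ← pow_succ]
  have htail_bound : ∀ K : ℕ, ‖γ ^ K • ∑ s, d K s • F s‖ ≤ γ ^ K * (∑ s : S, ‖F s‖) := by
    intro K
    rw [norm_smul, Real.norm_eq_abs, abs_of_nonneg (pow_nonneg hγ0 K)]
    refine mul_le_mul_of_nonneg_left ?_ (pow_nonneg hγ0 K)
    calc ‖∑ s, d K s • F s‖ ≤ ∑ s, ‖d K s • F s‖ := norm_sum_le _ _
      _ ≤ ∑ s, ‖F s‖ := by
          refine Finset.sum_le_sum fun s _ => ?_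
          rw [norm_smul, Real.norm_eq_abs, abs_of_nonneg (hd_nonneg K s)]
          exact mul_le_of_le_one_left (norm_nonneg _) (hd_le_one K s)
  have htail : Filter.Tendsto (fun K => γ ^ K • ∑ s, d K s • F s)
      Filter.atTop (nhds (0 : W)) := by
    refine squeeze_zero_norm htail_bound ?_
    have h5 : Filter.Tendsto (fun K : ℕ => γ ^ K * (∑ s : S, ‖F s‖))
        Filter.atTop (nhds (0 * (∑ s : S, ‖F s‖))) :=
      (tendsto_pow_atTop_nhds_zero_of_lt_one hγ0 hγ1).mul_const _
    simpa using h5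
  set g : ℕ → W := fun k => γ ^ k • (∑ s, d k s • G s) with hg
  have hpartial : Filter.Tendsto (fun K => ∑ k ∈ Finset.range K, g k)
      Filter.atTop (nhds (F s0)) := by
    have heq : (fun K => ∑ k ∈ Finset.range K, g k)
        = fun K => F s0 - γ ^ K • ∑ s, d K s • F s := by
      funext K
      rw [key K]; abel
    rw [heq]
    simpa using Filter.Tendsto.const_sub (F s0) htail
  have hgbound : ∀ k, ‖g k‖ ≤ γ ^ k * (∑ s : S, ‖G s‖) := by
    intro k
    show ‖γ ^ k • (∑ s, d k s • G s)‖ ≤ _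
    rw [norm_smul, Real.norm_eq_abs, abs_of_nonneg (pow_nonneg hγ0 k)]
    refine mul_le_mul_of_nonneg_left ?_ (pow_nonneg hγ0 k)
    calc ‖∑ s, d k s • G s‖ ≤ ∑ s, ‖d k s • G s‖ := norm_sum_le _ _
      _ ≤ ∑ s, ‖G s‖ := by
          refine Finset.sum_le_sum fun s _ => ?_
          rw [norm_smul, Real.norm_eq_abs, abs_of_nonneg (hd_nonneg k s)]
          exact mul_le_of_le_one_left (norm_nonneg _) (hd_le_one k s)
  have hgsummable : Summable g :=
    Summable.of_norm_bounded
      ((summable_geometric_of_lt_one hγ0 hγ1).mul_right _) hgbound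
  have hFs0 : F s0 = ∑' k, g k :=
    tendsto_nhds_unique hpartial hgsummable.hasSum.tendsto_sum_nat
  have hterm : ∀ k, g k = ∑ s, (γ ^ k * d k s) • G s := by
    intro k
    show γ ^ k • (∑ s, d k s • G s) = _
    rw [Finset.smul_sum]
    exact Finset.sum_congr rfl fun s _ => smul_smul _ _ _
  have hssum : ∀ s : S, Summable (fun k : ℕ => γ ^ k * d k s) := by
    intro s
    refine Summable.of_nonneg_of_le
      (fun k => mul_nonneg (pow_nonneg hγ0 k) (hd_nonneg k s))
      (fun k => ?_) (summable_geometric_of_lt_one hγ0 hγ1)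
    exact mul_le_of_le_one_right (pow_nonneg hγ0 k) (hd_le_one k s)
  have hswap : ∑' k, g k = ∑ s, η s • G s := by
    rw [tsum_congr hterm, Summable.tsum_finsetSum (fun s _ => (hssum s).smul_const (G s))]
    refine Finset.sum_congr rfl fun s _ => ?_
    rw [hη s, Summable.tsum_smul_const (hssum s)]
  rw [hFs0, hswap]


private lemma pg_bellman {E : Type} [NormedAddCommGroup E] [NormedSpace ℝ E]
    {S A : Type} [Fintype S] [Fintype A]
    (P : S → A → S → ℝ) (r c : S → A → ℝ) (γ lam : ℝ)
    (pol : E → S → A → ℝ)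
    (hpoldiff : ∀ s a, Differentiable ℝ (fun θ => pol θ s a))
    (V : E → S → ℝ) (Q : E → S → A → ℝ)
    (hV : ∀ θ s, V θ s = ∑ a, pol θ s a * Q θ s a)
    (hQ : ∀ θ s a, Q θ s a = (r s a - lam * c s a) + γ * ∑ s', P s a s' * V θ s')
    (hVdiff : ∀ s, Differentiable ℝ (fun θ => V θ s))
    (θ0 : E) (s : S) :
    fderiv ℝ (fun θ => V θ s) θ0
      = (∑ a, Q θ0 s a • fderiv ℝ (fun θ => pol θ s a) θ0)
        + γ • ∑ s', (∑ a, pol θ0 s a * P s a s') •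
            fderiv ℝ (fun θ => V θ s') θ0 := by
  set F : S → (E →L[ℝ] ℝ) := fun s => fderiv ℝ (fun θ => V θ s) θ0 with hF
  set G : S → (E →L[ℝ] ℝ) :=
    fun s => ∑ a, Q θ0 s a • fderiv ℝ (fun θ => pol θ s a) θ0 with hG
  have hQdiff : ∀ s a, Differentiable ℝ (fun θ => Q θ s a) := by
    intro s a
    have h1 : (fun θ => Q θ s a)
        = fun θ => (r s a - lam * c s a) + γ * ∑ s', P s a s' * V θ s' := by
      funext θ; exact hQ θ s a
    rw [h1]
    exact Differentiable.const_add _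
      ((Differentiable.fun_sum fun s' _ => (hVdiff s').const_mul _).const_mul _)
  have hFQ : ∀ s a, fderiv ℝ (fun θ => Q θ s a) θ0 = γ • ∑ s', P s a s' • F s' := by
    intro s a
    have h1 : (fun θ => Q θ s a)
        = fun θ => (r s a - lam * c s a) + γ * ∑ s', P s a s' * V θ s' := by
      funext θ; exact hQ θ s a
    rw [h1, fderiv_const_add,
      fderiv_const_mul ((Differentiable.fun_sum fun s' _ =>
        ((hVdiff s').const_mul _) : Differentiable ℝ _).differentiableAt),
      fderiv_fun_sum (fun s' _ => ((hVdiff s').const_mul _).differentiableAt)]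
    congr 1
    refine Finset.sum_congr rfl fun s' _ => ?_
    rw [fderiv_const_mul (hVdiff s').differentiableAt]
  have h1 : (fun θ => V θ s) = fun θ => ∑ a, pol θ s a * Q θ s a := by
    funext θ; exact hV θ s
  have h2 : F s = ∑ a, (pol θ0 s a • fderiv ℝ (fun θ => Q θ s a) θ0
      + Q θ0 s a • fderiv ℝ (fun θ => pol θ s a) θ0) := by
    show fderiv ℝ (fun θ => V θ s) θ0 = _
    rw [h1, fderiv_fun_sum (A := fun a θ => pol θ s a * Q θ s a) (fun a _ =>
      ((hpoldiff s a).differentiableAt.mul (hQdiff s a).differentiableAt))]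
    exact Finset.sum_congr rfl fun a _ =>
      fderiv_fun_mul (hpoldiff s a).differentiableAt (hQdiff s a).differentiableAt
  have h3 : ∀ a : A, pol θ0 s a • fderiv ℝ (fun θ => Q θ s a) θ0
      = γ • ∑ s', (pol θ0 s a * P s a s') • F s' := by
    intro a
    rw [hFQ s a, smul_comm]
    congr 1
    rw [Finset.smul_sum]
    exact Finset.sum_congr rfl fun s' _ => smul_smul _ _ _
  show F s = G s + γ • ∑ s', (∑ a, pol θ0 s a * P s a s') • F s'
  calc F s = ∑ a, (pol θ0 s a • fderiv ℝ (fun θ => Q θ s a) θ0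
        + Q θ0 s a • fderiv ℝ (fun θ => pol θ s a) θ0) := h2
    _ = (∑ a, pol θ0 s a • fderiv ℝ (fun θ => Q θ s a) θ0) + G s := by
        rw [Finset.sum_add_distrib]
    _ = (∑ a : A, γ • ∑ s', (pol θ0 s a * P s a s') • F s') + G s := by
        rw [Finset.sum_congr rfl fun a _ => h3 a]
    _ = (γ • ∑ a : A, ∑ s', (pol θ0 s a * P s a s') • F s') + G s := by
        rw [Finset.smul_sum]
    _ = (γ • ∑ s', ∑ a : A, (pol θ0 s a * P s a s') • F s') + G s := by
        rw [Finset.sum_comm]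
    _ = (γ • ∑ s', (∑ a, pol θ0 s a * P s a s') • F s') + G s := by
        congr 1
        congr 1
        exact Finset.sum_congr rfl fun s' _ => (Finset.sum_smul).symm
    _ = G s + γ • ∑ s', (∑ a, pol θ0 s a * P s a s') • F s' := add_comm _ _

/-- Lagrangian policy gradient theorem: the gradient of the combined value at
`s0` equals `∑_s η(s) ∑_a 𝐐(s,a) ∇π_θ(a|s)` where `η` is the discounted
state-visitation measure. -/
theorem lagrangian_policy_gradient
    {n : ℕ} (S A : Type) [Fintype S] [Fintype A] [DecidableEq S]
    [Nonempty S] [Nonempty A]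
    (P : S → A → S → ℝ) (r c : S → A → ℝ) (γ lam : ℝ)
    (hγ0 : 0 ≤ γ) (hγ1 : γ < 1)
    (hP : ∀ s a, (∀ s', 0 ≤ P s a s') ∧ ∑ s', P s a s' = 1)
    (pol : EuclideanSpace ℝ (Fin n) → S → A → ℝ)
    (hpol : ∀ θ s, (∀ a, 0 ≤ pol θ s a) ∧ ∑ a, pol θ s a = 1)
    (hpoldiff : ∀ s a, Differentiable ℝ (fun θ => pol θ s a))
    (V : EuclideanSpace ℝ (Fin n) → S → ℝ)
    (Q : EuclideanSpace ℝ (Fin n) → S → A → ℝ)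
    (hV : ∀ θ s, V θ s = ∑ a, pol θ s a * Q θ s a)
    (hQ : ∀ θ s a, Q θ s a = (r s a - lam * c s a) + γ * ∑ s', P s a s' * V θ s')
    (hVdiff : ∀ s, Differentiable ℝ (fun θ => V θ s))
    (θ0 : EuclideanSpace ℝ (Fin n)) (s0 : S)
    (d : ℕ → S → ℝ)
    (hd0 : ∀ s, d 0 s = if s = s0 then (1 : ℝ) else 0)
    (hdrec : ∀ k s', d (k + 1) s' = ∑ s, ∑ a, d k s * pol θ0 s a * P s a s')
    (η : S → ℝ) (hη : ∀ s, η s = ∑' k : ℕ, γ ^ k * d k s) :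
    fderiv ℝ (fun θ => V θ s0) θ0
      = ∑ s, η s • ∑ a, Q θ0 s a • fderiv ℝ (fun θ => pol θ s a) θ0 := by
  classical
  have hA : ∀ s : S, fderiv ℝ (fun θ => V θ s) θ0
      = (∑ a, Q θ0 s a • fderiv ℝ (fun θ => pol θ s a) θ0)
        + γ • ∑ s', (∑ a, pol θ0 s a * P s a s') •
            fderiv ℝ (fun θ => V θ s') θ0 :=
    fun s => pg_bellman P r c γ lam pol hpoldiff V Q hV hQ hVdiff θ0 s
  have hd_nonneg : ∀ k s, 0 ≤ d k s := by
    intro k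
    induction k with
    | zero => intro s; rw [hd0]; split <;> norm_num
    | succ k ih =>
      intro s'
      rw [hdrec]
      refine Finset.sum_nonneg fun s _ => Finset.sum_nonneg fun a _ => ?_
      exact mul_nonneg (mul_nonneg (ih s) ((hpol θ0 s).1 a)) ((hP s a).1 s')
  have hd_sum : ∀ k, ∑ s, d k s = 1 := by
    intro k
    induction k with
    | zero => simp [hd0]
    | succ k ih =>
      calc ∑ s', d (k+1) s' = ∑ s', ∑ s, ∑ a, d k s * pol θ0 s a * P s a s' :=
            Finset.sum_congr rfl fun s' _ => hdrec k s'
        _ = ∑ s, ∑ s', ∑ a, d k s * pol θ0 s a * P s a s' := Finset.sum_comm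
        _ = ∑ s, ∑ a, ∑ s', d k s * pol θ0 s a * P s a s' :=
            Finset.sum_congr rfl fun s _ => Finset.sum_comm
        _ = ∑ s, ∑ a, d k s * pol θ0 s a := by
            refine Finset.sum_congr rfl fun s _ => Finset.sum_congr rfl fun a _ => ?_
            rw [← Finset.mul_sum, (hP s a).2, mul_one]
        _ = ∑ s, d k s := by
            refine Finset.sum_congr rfl fun s _ => ?_
            rw [← Finset.mul_sum, (hpol θ0 s).2, mul_one]
        _ = 1 := ih
  have hd_le_one : ∀ k s, d k s ≤ 1 := by
    intro k s
    calc d k s ≤ ∑ t, d k t :=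
          Finset.single_le_sum (fun t _ => hd_nonneg k t) (Finset.mem_univ s)
      _ = 1 := hd_sum k
  have hdrec' : ∀ k s', d (k + 1) s'
      = ∑ s, d k s * (∑ a, pol θ0 s a * P s a s') := by
    intro k s'
    rw [hdrec]
    refine Finset.sum_congr rfl fun s _ => ?_
    rw [Finset.mul_sum]
    exact Finset.sum_congr rfl fun a _ => mul_assoc _ _ _
  exact pg_unroll_aux γ hγ0 hγ1 (fun s s' => ∑ a, pol θ0 s a * P s a s')
    (fun s => fderiv ℝ (fun θ => V θ s) θ0)
    (fun s => ∑ a, Q θ0 s a • fderiv ℝ (fun θ => pol θ s a) θ0)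
    hA s0 d hd0 hdrec' hd_nonneg hd_le_one η hη
end

section
/- Finite-horizon adversarial policy gradient theorem: under the same setting, the gradient of the combined value at the starting state satisfies ∇_φ 𝐕(s_0) = Σ_{k=0}^{H} E_{π, π_adv}[ 𝐕(s_{k+1}) ∇_φ log π_adv(s_{k+1} | s_k, a_k; φ) ], where H is the horizon, the expectation is over trajectories generated by policy π and transition kernel π_adv(·|·,·;φ), and π_adv(s'|s,a;φ) > 0 for all transitions. -/
/-- Finite-horizon adversarial policy gradient theorem (REINFORCE form):
`∇_φ 𝐕(s_0) = ∑_{k=0}^{H} E_{π,π_adv}[ 𝐕(s_{k+1}) ∇_φ log π_adv(s_{k+1}|s_k,a_k) ]`,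
where the expectation is written via the state distribution `d k` at step `k`
under `π` and `π_adv(·;φ0)`, and `𝐕` is the remaining-horizon combined value. -/
theorem adversarial_policy_gradient
    {m : ℕ} (S A : Type) [Fintype S] [Fintype A] [DecidableEq S]
    [Nonempty S] [Nonempty A]
    (pol : S → A → ℝ) (r c : S → A → ℝ) (lam : ℝ) (H : ℕ)
    (hpol : ∀ s, (∀ a, 0 ≤ pol s a) ∧ ∑ a, pol s a = 1)
    (Padv : EuclideanSpace ℝ (Fin m) → S → A → S → ℝ)
    (hPadvpos : ∀ φ s a s', 0 < Padv φ s a s')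
    (hPadvsum : ∀ φ s a, ∑ s', Padv φ s a s' = 1)
    (hPdiff : ∀ s a s', Differentiable ℝ (fun φ => Padv φ s a s'))
    (V : ℕ → EuclideanSpace ℝ (Fin m) → S → ℝ)
    (hV0 : ∀ φ s, V 0 φ s = 0)
    (hVrec : ∀ k φ s, V (k + 1) φ s
        = ∑ a, pol s a * ((r s a - lam * c s a) + ∑ s', Padv φ s a s' * V k φ s'))
    (φ0 : EuclideanSpace ℝ (Fin m)) (s0 : S)
    (d : ℕ → S → ℝ)
    (hd0 : ∀ s, d 0 s = if s = s0 then (1 : ℝ) else 0)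
    (hdrec : ∀ k s', d (k + 1) s' = ∑ s, ∑ a, d k s * pol s a * Padv φ0 s a s') :
    fderiv ℝ (fun φ => V (H + 1) φ s0) φ0
      = ∑ k ∈ Finset.range (H + 1), ∑ s, ∑ a, ∑ s',
          (d k s * pol s a * Padv φ0 s a s' * V (H - k) φ0 s') •
            fderiv ℝ (fun φ => Real.log (Padv φ s a s')) φ0 := by
  classical
  -- differentiability of V in φ
  have hdiff : ∀ n s, Differentiable ℝ (fun φ => V n φ s) := by
    intro n
    induction n with
    | zero =>
      intro s
      have h : (fun φ => V 0 φ s) = fun _ => (0 : ℝ) := funext fun φ => hV0 φ s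
      rw [h]; exact differentiable_const 0
    | succ n ih =>
      intro s
      have h : (fun φ => V (n + 1) φ s)
          = fun φ => ∑ a, pol s a * ((r s a - lam * c s a)
              + ∑ s', Padv φ s a s' * V n φ s') := funext fun φ => hVrec n φ s
      rw [h]
      exact Differentiable.fun_sum fun a _ =>
        (differentiable_const _).fun_mul ((differentiable_const _).fun_add
          (Differentiable.fun_sum fun s' _ => (hPdiff s a s').fun_mul (ih s')))
  have hG0 : ∀ s, fderiv ℝ (fun φ => V 0 φ s) φ0 = 0 := by
    intro s
    have h : (fun φ => V 0 φ s) = fun _ => (0 : ℝ) := funext fun φ => hV0 φ s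
    rw [h]; exact fderiv_const_apply 0
  -- recursion for the gradient
  have hGrec : ∀ n s, fderiv ℝ (fun φ => V (n + 1) φ s) φ0
      = ∑ a, ∑ s',
          ((pol s a * V n φ0 s') • fderiv ℝ (fun φ => Padv φ s a s') φ0
            + (pol s a * Padv φ0 s a s') • fderiv ℝ (fun φ => V n φ s') φ0) := by
    intro n s
    have hfun : (fun φ => V (n + 1) φ s)
        = fun φ => ∑ a, pol s a * ((r s a - lam * c s a)
            + ∑ s', Padv φ s a s' * V n φ s') := funext fun φ => hVrec n φ s
    have h : HasFDerivAt (fun φ => ∑ a, pol s a * ((r s a - lam * c s a)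
          + ∑ s', Padv φ s a s' * V n φ s'))
        (∑ a, pol s a • ∑ s',
          (Padv φ0 s a s' • fderiv ℝ (fun φ => V n φ s') φ0
            + V n φ0 s' • fderiv ℝ (fun φ => Padv φ s a s') φ0)) φ0 := by
      apply HasFDerivAt.fun_sum
      intro a _
      apply HasFDerivAt.const_mul
      apply HasFDerivAt.const_add
      apply HasFDerivAt.fun_sum
      intro s' _
      exact ((hPdiff s a s') φ0).hasFDerivAt.mul ((hdiff n s') φ0).hasFDerivAt
    rw [hfun, h.fderiv]
    refine Finset.sum_congr rfl fun a _ => ?_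
    rw [Finset.smul_sum]
    refine Finset.sum_congr rfl fun s' _ => ?_
    rw [smul_add, smul_smul, smul_smul]
    exact add_comm _ _
  -- swap a triple sum to pull the innermost index out
  have swap : ∀ (F : S → (EuclideanSpace ℝ (Fin m) →L[ℝ] ℝ)) (co : S → A → S → ℝ),
      (∑ s, ∑ a, ∑ s', co s a s' • F s')
        = ∑ s', (∑ s, ∑ a, co s a s') • F s' := by
    intro F co
    calc ∑ s, ∑ a, ∑ s', co s a s' • F s'
        = ∑ s, ∑ s', ∑ a, co s a s' • F s' :=
          Finset.sum_congr rfl fun s _ => Finset.sum_comm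
      _ = ∑ s', ∑ s, ∑ a, co s a s' • F s' := Finset.sum_comm
      _ = ∑ s', (∑ s, ∑ a, co s a s') • F s' := by
          simp [Finset.sum_smul]
  -- main unrolling lemma
  have key : ∀ n (e : ℕ → S → ℝ),
      (∀ k s', e (k + 1) s' = ∑ s, ∑ a, e k s * pol s a * Padv φ0 s a s') →
      ∑ s, e 0 s • fderiv ℝ (fun φ => V (n + 1) φ s) φ0
        = ∑ k ∈ Finset.range (n + 1), ∑ s, ∑ a, ∑ s',
            (e k s * pol s a * V (n - k) φ0 s') •
              fderiv ℝ (fun φ => Padv φ s a s') φ0 := by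
    intro n
    induction n with
    | zero =>
      intro e he
      simp [hGrec, hG0, hV0]
    | succ n ih =>
      intro e he
      have step1 : ∑ s, e 0 s • fderiv ℝ (fun φ => V (n + 1 + 1) φ s) φ0
          = (∑ s, ∑ a, ∑ s', (e 0 s * pol s a * V (n + 1) φ0 s') •
                fderiv ℝ (fun φ => Padv φ s a s') φ0)
            + ∑ s, ∑ a, ∑ s', (e 0 s * pol s a * Padv φ0 s a s') •
                fderiv ℝ (fun φ => V (n + 1) φ s') φ0 := by
        simp only [hGrec (n + 1), Finset.smul_sum, smul_add, smul_smul,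
          Finset.sum_add_distrib, mul_assoc]
      have step2 : (∑ s, ∑ a, ∑ s', (e 0 s * pol s a * Padv φ0 s a s') •
            fderiv ℝ (fun φ => V (n + 1) φ s') φ0)
          = ∑ s', e 1 s' • fderiv ℝ (fun φ => V (n + 1) φ s') φ0 := by
        rw [swap]
        exact Finset.sum_congr rfl fun s' _ => by rw [← he 0 s']
      have ihres := ih (fun k => e (k + 1)) (fun k s' => he (k + 1) s')
      rw [step1, step2, ihres, Finset.sum_range_succ' _ (n + 1)]
      simp only [Nat.succ_sub_succ, Nat.sub_zero]
      exact add_comm _ _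
  -- relate ∇ log to ∇
  have hlog : ∀ s a s', fderiv ℝ (fun φ => Real.log (Padv φ s a s')) φ0
      = (Padv φ0 s a s')⁻¹ • fderiv ℝ (fun φ => Padv φ s a s') φ0 := by
    intro s a s'
    exact (((hPdiff s a s') φ0).hasFDerivAt.log (hPadvpos φ0 s a s').ne').fderiv
  have hstart : fderiv ℝ (fun φ => V (H + 1) φ s0) φ0
      = ∑ s, d 0 s • fderiv ℝ (fun φ => V (H + 1) φ s) φ0 := by
    simp [hd0, ite_smul]
  rw [hstart, key H d hdrec]
  refine Finset.sum_congr rfl fun k _ => ?_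
  refine Finset.sum_congr rfl fun s _ => ?_
  refine Finset.sum_congr rfl fun a _ => ?_
  refine Finset.sum_congr rfl fun s' _ => ?_
  rw [hlog, smul_smul]
  congr 1
  have hne : Padv φ0 s a s' ≠ 0 := (hPadvpos φ0 s a s').ne'
  field_simp
end
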